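/- If Ω: TM → V is a virtual immersion, then its second fundamental form II is symmetric (II(X,Y) = II(Y,X) for all X,Y) if and only if dΩ = 0. -/
import Mathlib


/-
Algebraic (Koszul-style) model of a Riemannian manifold `(M,g)` equipped with a
virtual immersion `Ω : TM → V`:
* `C` is the ring of smooth functions on `M`,
* `VF` is the `C`-module of vector fields on `M`, with Lie `bracket` and
  derivation action `act : VF → C → C`,
* `g : VF → VF → C` is the Riemannian metric,
* `V` is the `C`-module of sections of the trivial bundle `M × V`, with the
  (pointwise) inner product `ip : V → V → C`,
* `Ω : VF →ₗ[C] V` is the virtual immersion (a `V`-valued one-form),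
* `D : VF → V → V` is the flat connection on `M × V`,
* `tang : V →ₗ[C] VF` is the tangential part: it is characterized by
  `ip v (Ω Z) = g (tang v) Z`, so `Ω (tang v)` is the orthogonal projection of
  `v` onto `Ω(TM)` and `v - Ω (tang v)` is the normal part of `v`.
-/

variable {C : Type*} [CommRing C]
variable {VF : Type*} [AddCommGroup VF] [Module C VF]
variable {V : Type*} [AddCommGroup V] [Module C V]

/-- The tangential connection `D^T_X Y = (D_X (Ω Y))^T`, viewed as a vector field. -/
def DT (Ω : VF →ₗ[C] V) (D : VF → V → V) (tang : V →ₗ[C] VF) (X Y : VF) : VF :=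
  tang (D X (Ω Y))

/-- The second fundamental form `II(X,Y) = (D_X (Ω Y))^⊥`. -/
def II (Ω : VF →ₗ[C] V) (D : VF → V → V) (tang : V →ₗ[C] VF) (X Y : VF) : V :=
  D X (Ω Y) - Ω (tang (D X (Ω Y)))

/-- The shape operator `S_η(X) = -(D_X η)^T`. -/
def Shape (D : VF → V → V) (tang : V →ₗ[C] VF) (η : V) (X : VF) : VF :=
  - tang (D X η)

/-- The curvature tensor `R(X,Y)Z = ∇_Y ∇_X Z - ∇_X ∇_Y Z + ∇_{[X,Y]} Z`,
where `∇ = D^T` is the Levi-Civita connection of `g` (valid for a virtual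
immersion). -/
def Rcurv (Ω : VF →ₗ[C] V) (D : VF → V → V) (tang : V →ₗ[C] VF)
    (bracket : VF → VF → VF) (X Y Z : VF) : VF :=
  DT Ω D tang Y (DT Ω D tang X Z) - DT Ω D tang X (DT Ω D tang Y Z)
    + DT Ω D tang (bracket X Y) Z

/-- The normal connection `D^⊥_X η = (D_X η)^⊥`. -/
def Dperp (Ω : VF →ₗ[C] V) (D : VF → V → V) (tang : V →ₗ[C] VF) (X : VF) (η : V) : V :=
  D X η - Ω (tang (D X η))

/-- The curvature of the normal connection (same sign convention as `Rcurv`). -/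
def Rperp (Ω : VF →ₗ[C] V) (D : VF → V → V) (tang : V →ₗ[C] VF)
    (bracket : VF → VF → VF) (X Y : VF) (η : V) : V :=
  Dperp Ω D tang Y (Dperp Ω D tang X η) - Dperp Ω D tang X (Dperp Ω D tang Y η)
    + Dperp Ω D tang (bracket X Y) η

/-- The covariant derivative of the second fundamental form,
`(D_X II)(Y,Z) = D_X (II(Y,Z)) - II(∇_X Y, Z) - II(Y, ∇_X Z)`. -/
def DII (Ω : VF →ₗ[C] V) (D : VF → V → V) (tang : V →ₗ[C] VF) (X Y Z : VF) : V :=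
  D X (II Ω D tang Y Z) - II Ω D tang (DT Ω D tang X Y) Z
    - II Ω D tang Y (DT Ω D tang X Z)

/-- for a virtual immersion `Ω`, the second fundamental form is
symmetric if and only if `dΩ = 0`, where
`dΩ(X,Y) = D_X (Ω Y) - D_Y (Ω X) - Ω [X,Y]`. -/
theorem stmt1
    (act : VF → C → C) (bracket : VF → VF → VF) (g : VF → VF → C) (ip : V → V → C)
    (Ω : VF →ₗ[C] V) (D : VF → V → V) (tang : V →ₗ[C] VF)
    (h_act_add : ∀ X (f f' : C), act X (f + f') = act X f + act X f')
    (h_act_mul : ∀ X (f f' : C), act X (f * f') = f * act X f' + f' * act X f)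
    (h_br_skew : ∀ X Y, bracket X Y = - bracket Y X)
    (h_br_leib : ∀ X (f : C) Y, bracket X (f • Y) = act X f • Y + f • bracket X Y)
    (h_g_symm : ∀ X Y, g X Y = g Y X)
    (h_g_addl : ∀ X X' Y, g (X + X') Y = g X Y + g X' Y)
    (h_g_smull : ∀ (f : C) X Y, g (f • X) Y = f * g X Y)
    (h_g_nondeg : ∀ X, (∀ Y, g X Y = 0) → X = 0)
    (h_ip_symm : ∀ u v, ip u v = ip v u)
    (h_ip_addl : ∀ u u' v, ip (u + u') v = ip u v + ip u' v)
    (h_ip_smull : ∀ (f : C) u v, ip (f • u) v = f * ip u v)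
    (hD_addX : ∀ X X' v, D (X + X') v = D X v + D X' v)
    (hD_smulX : ∀ (f : C) X v, D (f • X) v = f • D X v)
    (hD_addv : ∀ X u v, D X (u + v) = D X u + D X v)
    (hD_leib : ∀ X (f : C) v, D X (f • v) = act X f • v + f • D X v)
    (hD_flat : ∀ X Y v, D X (D Y v) - D Y (D X v) = D (bracket X Y) v)
    (hD_ip : ∀ X u v, act X (ip u v) = ip (D X u) v + ip u (D X v))
    (h_tang : ∀ v Z, ip v (Ω Z) = g (tang v) Z)
    (ha : ∀ X Y, ip (Ω X) (Ω Y) = g X Y)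
    (hb : ∀ X Y Z, ip (D X (Ω Y) - D Y (Ω X) - Ω (bracket X Y)) (Ω Z) = 0) :
    (∀ X Y, II Ω D tang X Y = II Ω D tang Y X) ↔
      (∀ X Y, D X (Ω Y) - D Y (Ω X) - Ω (bracket X Y) = 0) := by

  -- g of negation and subtraction
  have hneg : ∀ X Y, g (-X) Y = - g X Y := by
    intro X Y
    have := h_g_smull (-1) X Y
    simpa using this
  have hsub : ∀ X X' Y, g (X - X') Y = g X Y - g X' Y := by
    intro X X' Y
    rw [sub_eq_add_neg, h_g_addl, hneg, sub_eq_add_neg]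
  -- tang ∘ Ω = id
  have hΩtang : ∀ W, tang (Ω W) = W := by
    intro W
    have h0 : ∀ Z, g (tang (Ω W) - W) Z = 0 := by
      intro Z
      rw [hsub, ← h_tang, ha, sub_self]
    have := h_g_nondeg _ h0
    exact sub_eq_zero.mp this
  -- tangential part of dΩ vanishes
  have hw : ∀ X Y, tang (D X (Ω Y) - D Y (Ω X) - Ω (bracket X Y)) = 0 := by
    intro X Y
    apply h_g_nondeg
    intro Z
    rw [← h_tang, hb]
  -- key identity: II X Y - II Y X = dΩ(X,Y)
  have key : ∀ X Y, II Ω D tang X Y - II Ω D tang Y X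
      = D X (Ω Y) - D Y (Ω X) - Ω (bracket X Y) := by
    intro X Y
    have h1 := hw X Y
    rw [map_sub, map_sub, hΩtang, sub_eq_zero] at h1
    have h2 : Ω (tang (D X (Ω Y))) - Ω (tang (D Y (Ω X))) = Ω (bracket X Y) := by
      rw [← map_sub, h1]
    simp only [II]
    rw [show D X (Ω Y) - Ω (tang (D X (Ω Y))) - (D Y (Ω X) - Ω (tang (D Y (Ω X))))
        = D X (Ω Y) - D Y (Ω X)
          - (Ω (tang (D X (Ω Y))) - Ω (tang (D Y (Ω X)))) by abel, h2]
  constructor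
  · intro h X Y
    rw [← key, h X Y, sub_self]
  · intro h X Y
    have := key X Y
    rw [h X Y] at this
    exact sub_eq_zero.mp this
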